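/- Let 𝔲 be a finite-dimensional nilpotent Lie algebra over a field F of characteristic 0, of dimension c, and V a finite-dimensional 𝔲-module. Then the Lie algebra homology H_0(𝔲, V) (the coinvariants V/𝔲V) is isomorphic to H^c(𝔲, V) ⊗ Λ^c 𝔲^* as vector spaces, i.e., the top Lie algebra cohomology twisted by the top exterior power of 𝔲 recovers the coinvariants (Poincaré duality for Lie algebra cohomology of nilpotent Lie algebras). -/

import Mathlib

open scoped TensorProduct BigOperators

namespace PDaux

variable {F : Type*} [Field F] {𝔲 : Type*} [LieRing 𝔲] [LieAlgebra F 𝔲]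
  {W : Type*} [AddCommGroup W] [Module F W] {n : ℕ}

/-- Evaluation of a top alternating map at the basis tuple. -/
noncomputable def evalTop (b : Module.Basis (Fin (n + 1)) F 𝔲) :
    AlternatingMap F 𝔲 W (Fin (n + 1)) →ₗ[F] W where
  toFun ω := ω ⇑b
  map_add' _ _ := rfl
  map_smul' _ _ := rfl

lemma top_eq_zero (b : Module.Basis (Fin (n + 1)) F 𝔲)
    (ω : AlternatingMap F 𝔲 W (Fin (n + 1))) (h : ω ⇑b = 0) : ω = 0 := by
  refine b.ext_alternating fun v hv => ?_
  have hbij : Function.Bijective v := (Finite.injective_iff_bijective).mp hv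
  have : (fun i => b (v i)) = ⇑b ∘ ⇑(Equiv.ofBijective v hbij) := rfl
  rw [this, AlternatingMap.map_perm, h, smul_zero]
  simp

lemma evalTop_bij (b : Module.Basis (Fin (n + 1)) F 𝔲) :
    Function.Bijective (evalTop (W := W) b) := by
  constructor
  · rw [← LinearMap.ker_eq_bot]
    refine LinearMap.ker_eq_bot'.mpr fun ω h => top_eq_zero b ω h
  · intro w
    refine ⟨(LinearMap.toSpanSingleton F W w).compAlternatingMap b.det, ?_⟩
    show (LinearMap.toSpanSingleton F W w) (b.det ⇑b) = w
    rw [Module.Basis.det_self, LinearMap.toSpanSingleton_apply, one_smul]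

/-- Evaluation of top alternating map as linear equivalence. -/
noncomputable def evalTopEquiv (b : Module.Basis (Fin (n + 1)) F 𝔲) :
    AlternatingMap F 𝔲 W (Fin (n + 1)) ≃ₗ[F] W :=
  LinearEquiv.ofBijective (evalTop b) (evalTop_bij b)

/-- Evaluation of a degree-`n` alternating map at the basis tuple with `m`-th entry omitted. -/
noncomputable def evalLow (b : Module.Basis (Fin (n + 1)) F 𝔲) (m : Fin (n + 1)) :
    AlternatingMap F 𝔲 W (Fin n) →ₗ[F] W where
  toFun ω := ω (⇑b ∘ m.succAbove)
  map_add' _ _ := rfl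
  map_smul' _ _ := rfl

lemma low_eq_zero (b : Module.Basis (Fin (n + 1)) F 𝔲)
    (ω : AlternatingMap F 𝔲 W (Fin n)) (h : ∀ m : Fin (n + 1), ω (⇑b ∘ m.succAbove) = 0) :
    ω = 0 := by
  refine b.ext_alternating fun v hv => ?_
  have hns : ¬ Function.Surjective v := by
    intro hs
    have := Fintype.card_le_of_surjective v hs
    simp at this
  rw [Function.Surjective] at hns
  push_neg at hns
  obtain ⟨m, hm⟩ := hns
  choose u hu using fun t => Fin.exists_succAbove_eq (fun h => hm t h : v t ≠ m)
  have hu_inj : Function.Injective u := fun a c hac => hv (by rw [← hu a, ← hu c, hac])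
  have hbij : Function.Bijective u := (Finite.injective_iff_bijective).mp hu_inj
  have hcomp : (fun i => b (v i)) = (⇑b ∘ m.succAbove) ∘ ⇑(Equiv.ofBijective u hbij) := by
    funext t
    simp only [Function.comp_apply, Equiv.ofBijective_apply, hu t]
  rw [hcomp, AlternatingMap.map_perm, h m, smul_zero]
  simp


lemma det_comp_perm (b : Module.Basis (Fin (n + 1)) F 𝔲) (σ : Equiv.Perm (Fin (n + 1))) :
    b.det (⇑b ∘ ⇑σ) = ((Equiv.Perm.sign σ : ℤ) : F) := by
  rw [AlternatingMap.map_perm, Module.Basis.det_self, Units.smul_def, zsmul_one]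

lemma cons_succAbove_eq (k : Fin (n + 1)) :
    (Fin.cons k k.succAbove : Fin (n + 1) → Fin (n + 1)) = ⇑(k.cycleRange).symm := by
  funext t
  refine Fin.cases ?_ (fun s => ?_) t
  · simp [Fin.cycleRange_symm_zero]
  · simp [Fin.cycleRange_symm_succ]

lemma det_cons_succAbove_self (b : Module.Basis (Fin (n + 1)) F 𝔲) (k : Fin (n + 1)) :
    b.det (Fin.cons (b k) (⇑b ∘ k.succAbove)) = (-1 : F) ^ (k : ℕ) := by
  have h1 : Fin.cons (b k) (⇑b ∘ k.succAbove) =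
      ⇑b ∘ (Fin.cons k k.succAbove : Fin (n + 1) → Fin (n + 1)) := by
    rw [Fin.comp_cons]
  rw [h1, cons_succAbove_eq, det_comp_perm]
  rw [Equiv.Perm.sign_symm, Fin.sign_cycleRange]
  push_cast
  ring

lemma det_cons_succAbove_ne (b : Module.Basis (Fin (n + 1)) F 𝔲) (k m : Fin (n + 1)) (h : k ≠ m) :
    b.det (Fin.cons (b k) (⇑b ∘ m.succAbove)) = 0 := by
  obtain ⟨s, hs⟩ := Fin.exists_succAbove_eq h
  refine AlternatingMap.map_eq_zero_of_eq _ _ (i := 0) (j := s.succ) ?_ (Fin.succ_ne_zero s).symm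
  simp [hs]

/-- The basic degree-`n` alternating maps spanning the space. -/
noncomputable def ωlow (b : Module.Basis (Fin (n + 1)) F 𝔲) (k : Fin (n + 1)) (v : W) :
    AlternatingMap F 𝔲 W (Fin n) :=
  (LinearMap.toSpanSingleton F W v).compAlternatingMap (b.det.curryLeft (b k))

lemma ωlow_apply (b : Module.Basis (Fin (n + 1)) F 𝔲) (k : Fin (n + 1)) (v : W) (x : Fin n → 𝔲) :
    ωlow b k v x = b.det (Fin.cons (b k) x) • v := rfl

lemma ωlow_evalLow (b : Module.Basis (Fin (n + 1)) F 𝔲) (k m : Fin (n + 1)) (v : W) :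
    ωlow b k v (⇑b ∘ m.succAbove) = (if k = m then ((-1 : F) ^ (k : ℕ)) else 0) • v := by
  rw [ωlow_apply]
  by_cases h : k = m
  · subst h; rw [det_cons_succAbove_self, if_pos rfl]
  · rw [det_cons_succAbove_ne b k m h, if_neg h]

lemma evalLow_apply (b : Module.Basis (Fin (n + 1)) F 𝔲) (m : Fin (n + 1))
    (ω : AlternatingMap F 𝔲 W (Fin n)) : evalLow b m ω = ω (⇑b ∘ m.succAbove) := rfl

lemma ωlow_spans (b : Module.Basis (Fin (n + 1)) F 𝔲) (ω : AlternatingMap F 𝔲 W (Fin n)) :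
    ω = ∑ k : Fin (n + 1), ωlow b k (((-1 : F) ^ (k : ℕ)) • ω (⇑b ∘ k.succAbove)) := by
  rw [← sub_eq_zero]
  refine low_eq_zero b _ fun m => ?_
  have hsum : evalLow (W := W) b m
      (∑ k : Fin (n + 1), ωlow b k (((-1 : F) ^ (k : ℕ)) • ω (⇑b ∘ k.succAbove)))
      = ω (⇑b ∘ m.succAbove) := by
    rw [map_sum]
    rw [Finset.sum_eq_single m]
    · rw [evalLow_apply, ωlow_evalLow, if_pos rfl, smul_smul, ← mul_pow]
      norm_num
    · intro k _ hk
      rw [evalLow_apply, ωlow_evalLow, if_neg hk, zero_smul]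
    · intro hm; exact absurd (Finset.mem_univ m) hm
  rw [evalLow_apply] at hsum
  rw [AlternatingMap.sub_apply, hsum, sub_self]


lemma det_dup (b : Module.Basis (Fin (n + 1)) F 𝔲) (w : Fin (n + 1) → Fin (n + 1))
    {a c : Fin (n + 1)} (hac : a ≠ c) (h : w a = w c) : b.det (⇑b ∘ w) = 0 :=
  AlternatingMap.map_eq_zero_of_eq _ _ (by simp [h]) hac

lemma det_update_eval (b : Module.Basis (Fin (n + 1)) F 𝔲) (k i j : Fin (n + 1))
    (hij : (i : ℕ) < (j : ℕ)) (hi : (i : ℕ) < n) (m : Fin (n + 1)) :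
    b.det (⇑b ∘ Function.update (Fin.cons k j.succAbove : Fin (n + 1) → Fin (n + 1))
      (⟨i, hi⟩ : Fin n).succ m) =
      if k = j ∧ m = i then (-1 : F) ^ (j : ℕ)
      else if k = i ∧ m = j then -(-1 : F) ^ (j : ℕ) else 0 := by
  classical
  set p : Fin n := ⟨i, hi⟩ with hp
  have hij' : i ≠ j := fun h => by rw [h] at hij; exact lt_irrefl _ hij
  have hpA : j.succAbove p = i := by
    have hc : p.castSucc < j := by
      simp only [Fin.lt_def, Fin.coe_castSucc]
      exact hij
    rw [Fin.succAbove_of_castSucc_lt _ _ hc]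
    exact Fin.ext rfl
  set w : Fin (n + 1) → Fin (n + 1) :=
    Function.update (Fin.cons k j.succAbove : Fin (n + 1) → Fin (n + 1)) p.succ m with hw
  have hw0 : w 0 = k := by
    rw [hw, Function.update_of_ne (Fin.succ_ne_zero p).symm, Fin.cons_zero]
  have hwp : w p.succ = m := by rw [hw, Function.update_self]
  have hws : ∀ s : Fin n, s ≠ p → w s.succ = j.succAbove s := by
    intro s hs
    rw [hw, Function.update_of_ne (fun h => hs (Fin.succ_injective _ h)), Fin.cons_succ]
  by_cases hkj : k = j ∧ m = i
  · obtain ⟨hk, hm⟩ := hkj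
    rw [if_pos ⟨hk, hm⟩]
    have hwe : w = (Fin.cons j j.succAbove : Fin (n + 1) → Fin (n + 1)) := by
      rw [hw, hk, hm]
      have : i = (Fin.cons j j.succAbove : Fin (n + 1) → Fin (n + 1)) p.succ := by
        rw [Fin.cons_succ, hpA]
      rw [this, Function.update_eq_self]
    rw [hwe, cons_succAbove_eq, det_comp_perm, Equiv.Perm.sign_symm, Fin.sign_cycleRange]
    push_cast; ring
  · by_cases hki : k = i ∧ m = j
    · obtain ⟨hk, hm⟩ := hki
      rw [if_neg hkj, if_pos ⟨hk, hm⟩]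
      have hwe : w = ⇑(j.cycleRange.symm * Equiv.swap 0 p.succ) := by
        funext t
        rcases eq_or_ne t 0 with rfl | ht0
        · rw [hw0, hk]
          simp only [Equiv.Perm.mul_apply, Equiv.swap_apply_left, Fin.cycleRange_symm_succ, hpA]
        · rcases eq_or_ne t p.succ with rfl | htp
          · rw [hwp, hm]
            simp only [Equiv.Perm.mul_apply, Equiv.swap_apply_right, Fin.cycleRange_symm_zero]
          · obtain ⟨s, rfl⟩ := Fin.eq_succ_of_ne_zero ht0
            have hsp : s ≠ p := fun h => htp (by rw [h])
            rw [hws s hsp]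
            simp only [Equiv.Perm.mul_apply,
              Equiv.swap_apply_of_ne_of_ne ht0 htp, Fin.cycleRange_symm_succ]
      rw [hwe, det_comp_perm]
      rw [map_mul, Equiv.Perm.sign_symm, Fin.sign_cycleRange,
        Equiv.Perm.sign_swap (Fin.succ_ne_zero p).symm]
      push_cast; ring
    · rw [if_neg hkj, if_neg hki]
      -- duplicate entry cases
      rcases eq_or_ne m i with rfl | hmi
      · -- m = i, so k ≠ j
        have hknej : k ≠ j := fun h => hkj ⟨h, rfl⟩
        rcases eq_or_ne k m with rfl | hkm
        · exact det_dup b w (Fin.succ_ne_zero p).symm (by rw [hw0, hwp])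
        · obtain ⟨s, hs⟩ := Fin.exists_succAbove_eq hknej
          have hsp : s ≠ p := fun h => hkm (by rw [← hs, h, hpA])
          refine det_dup b w (a := 0) (c := s.succ) (Fin.succ_ne_zero s).symm ?_
          rw [hw0, hws s hsp, hs]
      · rcases eq_or_ne m j with rfl | hmj
        · -- m = j, so k ≠ i
          have hknei : k ≠ i := fun h => hki ⟨h, rfl⟩
          rcases eq_or_ne k m with rfl | hkm
          · exact det_dup b w (Fin.succ_ne_zero p).symm (by rw [hw0, hwp])
          · obtain ⟨s, hs⟩ := Fin.exists_succAbove_eq hkm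
            have hsp : s ≠ p := fun h => hknei (by rw [← hs, h, hpA])
            refine det_dup b w (a := 0) (c := s.succ) (Fin.succ_ne_zero s).symm ?_
            rw [hw0, hws s hsp, hs]
        · -- m ∉ {i, j} : m appears twice in the tail
          obtain ⟨s, hs⟩ := Fin.exists_succAbove_eq hmj
          have hsp : s ≠ p := fun h => hmi (by rw [← hs, h, hpA])
          refine det_dup b w (a := s.succ) (c := p.succ)
            (fun h => hsp (Fin.succ_injective _ h)) ?_
          rw [hws s hsp, hwp, hs]


lemma trace_ad_eq_sum (b : Module.Basis (Fin (n + 1)) F 𝔲) (x : 𝔲) :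
    LinearMap.trace F 𝔲 ((LieAlgebra.ad F 𝔲) x) = ∑ m : Fin (n + 1), b.repr ⁅x, b m⁆ m := by
  rw [LinearMap.trace_eq_matrix_trace F b, Matrix.trace]
  refine Finset.sum_congr rfl fun m _ => ?_
  rw [Matrix.diag_apply, LinearMap.toMatrix_apply]
  simp

section LieModuleV

variable {V : Type*} [AddCommGroup V] [Module F V] [LieRingModule 𝔲 V] [LieModule F 𝔲 V]

lemma master (b : Module.Basis (Fin (n + 1)) F 𝔲)
    (htr : ∀ x : 𝔲, LinearMap.trace F 𝔲 ((LieAlgebra.ad F 𝔲) x) = 0)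
    (k : Fin (n + 1)) (v : V) :
    ((∑ a : Fin (n + 1), ((-1 : F) ^ (a : ℕ)) • ⁅b a, ωlow b k v (⇑b ∘ a.succAbove)⁆) +
      ∑ j : Fin (n + 1), ∑ i : Fin (n + 1),
        if hij : (i : ℕ) < (j : ℕ) then
          ((-1 : F) ^ (j : ℕ)) • ωlow b k v (Function.update (⇑b ∘ j.succAbove)
            (⟨(i : ℕ), lt_of_lt_of_le hij (Nat.lt_succ_iff.mp j.isLt)⟩ : Fin n) ⁅b i, b j⁆)
        else 0) = ⁅b k, v⁆ := by
  classical
  set C : Fin (n + 1) → Fin (n + 1) → Fin (n + 1) → F :=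
    fun i j m => b.repr ⁅b i, b j⁆ m with hC
  -- the first sum
  have h1 : (∑ a : Fin (n + 1), ((-1 : F) ^ (a : ℕ)) • ⁅b a, ωlow b k v (⇑b ∘ a.succAbove)⁆)
      = ⁅b k, v⁆ := by
    rw [Finset.sum_eq_single k]
    · rw [ωlow_evalLow, if_pos rfl, lie_smul, smul_smul, ← mul_pow]
      norm_num
    · intro a _ hak
      rw [ωlow_evalLow, if_neg (fun h => hak h.symm), zero_smul, lie_zero, smul_zero]
    · intro hk; exact absurd (Finset.mem_univ k) hk
  -- the second sum vanishes
  have h2 : (∑ j : Fin (n + 1), ∑ i : Fin (n + 1),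
      if hij : (i : ℕ) < (j : ℕ) then
        ((-1 : F) ^ (j : ℕ)) • ωlow b k v (Function.update (⇑b ∘ j.succAbove)
          (⟨(i : ℕ), lt_of_lt_of_le hij (Nat.lt_succ_iff.mp j.isLt)⟩ : Fin n) ⁅b i, b j⁆)
      else 0) = 0 := by
    -- the value of each term
    have hterm : ∀ (i j : Fin (n + 1)), (i : ℕ) < (j : ℕ) → ∀ hi : (i : ℕ) < n,
        ((-1 : F) ^ (j : ℕ)) • ωlow b k v (Function.update (⇑b ∘ j.succAbove)
          (⟨(i : ℕ), hi⟩ : Fin n) ⁅b i, b j⁆)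
        = (if k = j then C i j i else if k = i then -(C i j j) else 0) • v := by
      intro i j hij hi
      have hij' : i ≠ j := fun h => by rw [h] at hij; exact lt_irrefl _ hij
      rw [ωlow_apply]
      have hD : b.det (Fin.cons (b k) (Function.update (⇑b ∘ j.succAbove)
          (⟨(i : ℕ), hi⟩ : Fin n) ⁅b i, b j⁆))
          = if k = j then C i j i * (-1 : F) ^ (j : ℕ)
            else if k = i then -(C i j j * (-1 : F) ^ (j : ℕ)) else 0 := by
        rw [Fin.cons_update, ← Fin.comp_cons]
        conv_lhs => rw [← b.sum_repr ⁅b i, b j⁆]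
        rw [AlternatingMap.map_update_sum]
        have hper : ∀ m : Fin (n + 1),
            b.det (Function.update (⇑b ∘ (Fin.cons k j.succAbove : Fin (n + 1) → Fin (n + 1)))
              (⟨(i : ℕ), hi⟩ : Fin n).succ (b.repr ⁅b i, b j⁆ m • b m))
            = C i j m * (if k = j ∧ m = i then (-1 : F) ^ (j : ℕ)
              else if k = i ∧ m = j then -(-1 : F) ^ (j : ℕ) else 0) := by
          intro m
          rw [AlternatingMap.map_update_smul, ← Function.comp_update,
            det_update_eval b k i j hij hi m, smul_eq_mul, hC]
        rw [Finset.sum_congr rfl fun m _ => hper m]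
        by_cases hkj : k = j
        · subst hkj
          have hki : k ≠ i := fun h => hij' h.symm
          rw [if_pos rfl]
          rw [Finset.sum_eq_single i]
          · rw [if_pos ⟨rfl, rfl⟩]
          · intro m _ hmi
            rw [if_neg (fun h => hmi h.2), if_neg (fun h => hki h.1), mul_zero]
          · intro h; exact absurd (Finset.mem_univ i) h
        · rw [if_neg hkj]
          by_cases hki : k = i
          · subst hki
            rw [if_pos rfl]
            rw [Finset.sum_eq_single j]
            · rw [if_neg (fun h => hkj h.1), if_pos ⟨rfl, rfl⟩]
              ring
            · intro m _ hmj
              rw [if_neg (fun h => hkj h.1), if_neg (fun h => hmj h.2), mul_zero]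
            · intro h; exact absurd (Finset.mem_univ j) h
          · rw [if_neg hki]
            refine Finset.sum_eq_zero fun m _ => ?_
            rw [if_neg (fun h => hkj h.1), if_neg (fun h => hki h.1), mul_zero]
      rw [hD]
      by_cases hkj : k = j
      · rw [if_pos hkj, if_pos hkj, smul_smul, mul_comm, mul_assoc, ← mul_pow]
        norm_num
      · rw [if_neg hkj, if_neg hkj]
        by_cases hki : k = i
        · rw [if_pos hki, if_pos hki, smul_smul]
          rw [mul_neg, mul_comm (C i j j), ← mul_assoc, ← mul_pow]
          norm_num
        · rw [if_neg hki, if_neg hki, zero_smul, smul_zero]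
    -- rewrite each dite term
    have hterm' : ∀ (j i : Fin (n + 1)),
        (if hij : (i : ℕ) < (j : ℕ) then
          ((-1 : F) ^ (j : ℕ)) • ωlow b k v (Function.update (⇑b ∘ j.succAbove)
            (⟨(i : ℕ), lt_of_lt_of_le hij (Nat.lt_succ_iff.mp j.isLt)⟩ : Fin n) ⁅b i, b j⁆)
        else 0)
        = ((if (i : ℕ) < (j : ℕ) then
            (if k = j then C i j i else if k = i then -(C i j j) else 0) else 0) : F) • v := by
      intro j i
      by_cases hij : (i : ℕ) < (j : ℕ)
      · rw [dif_pos hij, if_pos hij, hterm i j hij]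
      · rw [dif_neg hij, if_neg hij, zero_smul]
    calc (∑ j : Fin (n + 1), ∑ i : Fin (n + 1),
        if hij : (i : ℕ) < (j : ℕ) then
          ((-1 : F) ^ (j : ℕ)) • ωlow b k v (Function.update (⇑b ∘ j.succAbove)
            (⟨(i : ℕ), lt_of_lt_of_le hij (Nat.lt_succ_iff.mp j.isLt)⟩ : Fin n) ⁅b i, b j⁆)
        else 0)
        = (∑ j : Fin (n + 1), ∑ i : Fin (n + 1),
            (if (i : ℕ) < (j : ℕ) then
              (if k = j then C i j i else if k = i then -(C i j j) else 0) else 0)) • v := by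
          rw [Finset.sum_smul]
          refine Finset.sum_congr rfl fun j _ => ?_
          rw [Finset.sum_smul]
          exact Finset.sum_congr rfl fun i _ => hterm' j i
      _ = (0 : F) • v := by
          congr 1
          -- scalar identity
          have hsplit : ∀ (j i : Fin (n + 1)),
              ((if (i : ℕ) < (j : ℕ) then
                (if k = j then C i j i else if k = i then -(C i j j) else 0) else 0) : F)
              = (if k = j then (if (i : ℕ) < (j : ℕ) then C i j i else 0) else 0) +
                (if k = i then (if (k : ℕ) < (j : ℕ) then -(C i j j) else 0) else 0) := by
            intro j i
            by_cases h1 : (i : ℕ) < (j : ℕ)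
            · by_cases h2 : k = j
              · have h3 : k ≠ i := fun h => by
                  rw [← h2, h] at h1; exact lt_irrefl _ h1
                rw [if_pos h1, if_pos h2, if_pos h2, if_pos h1, if_neg h3, add_zero]
              · by_cases h3 : k = i
                · rw [if_pos h1, if_neg h2, if_neg h2, if_pos h3, if_pos h3, zero_add,
                    if_pos (h3 ▸ h1)]
                · rw [if_pos h1, if_neg h2, if_neg h3, if_neg h2, if_neg h3, add_zero]
            · by_cases h2 : k = j
              · rw [if_neg h1, if_pos h2, if_neg h1]
                by_cases h3 : k = i
                · rw [if_pos h3]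
                  have : ¬ (k : ℕ) < (j : ℕ) := h3 ▸ (h2 ▸ h1)
                  rw [if_neg this, add_zero]
                · rw [if_neg h3, add_zero]
              · rw [if_neg h1, if_neg h2]
                by_cases h3 : k = i
                · rw [if_pos h3]
                  have : ¬ (k : ℕ) < (j : ℕ) := h3 ▸ h1
                  rw [if_neg this, zero_add]
                · rw [if_neg h3, add_zero]
          rw [Finset.sum_congr rfl fun j _ => Finset.sum_congr rfl fun i _ => hsplit j i]
          rw [Finset.sum_congr rfl fun j _ => Finset.sum_add_distrib (s := Finset.univ)]
          rw [Finset.sum_add_distrib]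
          -- first double sum
          have hs1 : (∑ j : Fin (n + 1), ∑ i : Fin (n + 1),
              (if k = j then (if (i : ℕ) < (j : ℕ) then C i j i else 0) else 0))
              = ∑ i : Fin (n + 1), (if (i : ℕ) < (k : ℕ) then C i k i else 0) := by
            have : ∀ j : Fin (n + 1), (∑ i : Fin (n + 1),
                (if k = j then (if (i : ℕ) < (j : ℕ) then C i j i else 0) else 0))
                = (if k = j then (∑ i : Fin (n + 1),
                    (if (i : ℕ) < (j : ℕ) then C i j i else 0)) else 0) := by
              intro j
              by_cases h : k = j
              · simp only [if_pos h]
              · simp only [if_neg h, Finset.sum_const_zero]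
            rw [Finset.sum_congr rfl fun j _ => this j, Fintype.sum_ite_eq]
          have hs2 : (∑ j : Fin (n + 1), ∑ i : Fin (n + 1),
              (if k = i then (if (k : ℕ) < (j : ℕ) then -(C i j j) else 0) else 0))
              = ∑ j : Fin (n + 1), (if (k : ℕ) < (j : ℕ) then -(C k j j) else 0) := by
            refine Finset.sum_congr rfl fun j _ => ?_
            rw [Fintype.sum_ite_eq]
          rw [hs1, hs2]
          -- antisymmetry: C i k i = -(C k i i)
          have hanti : ∀ i : Fin (n + 1), C i k i = -(C k i i) := by
            intro i
            rw [hC]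
            simp only
            rw [← lie_skew (b k) (b i), map_neg, Finsupp.neg_apply, neg_neg]
          have hrw : (∑ i : Fin (n + 1), if (i : ℕ) < (k : ℕ) then C i k i else 0)
              = ∑ i : Fin (n + 1), if (i : ℕ) < (k : ℕ) then -(C k i i) else 0 :=
            Finset.sum_congr rfl fun i _ => by rw [hanti i]
          rw [hrw]
          -- combine into the negative of the trace
          have hcomb : ∀ m : Fin (n + 1),
              ((if (m : ℕ) < (k : ℕ) then -(C k m m) else 0) +
                (if (k : ℕ) < (m : ℕ) then -(C k m m) else 0)) = -(C k m m) := by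
            intro m
            rcases lt_trichotomy (m : ℕ) (k : ℕ) with h | h | h
            · rw [if_pos h, if_neg (by omega), add_zero]
            · have hmk : m = k := Fin.ext h
              subst hmk
              have hCkk : C m m m = 0 := by rw [hC]; simp
              rw [if_neg (by omega : ¬(m : ℕ) < (m : ℕ)), hCkk, neg_zero, add_zero]
            · rw [if_neg (by omega), if_pos h, zero_add]
          rw [← Finset.sum_add_distrib, Finset.sum_congr rfl fun m _ => hcomb m]
          rw [Finset.sum_neg_distrib]
          have : (∑ m : Fin (n + 1), C k m m) = 0 := by
            rw [hC]
            simp only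
            rw [← trace_ad_eq_sum b (b k)]
            exact htr (b k)
          rw [this, neg_zero]
      _ = 0 := by rw [zero_smul]
  rw [h1, h2, add_zero]

/-- Bracket action with fixed module element, as a linear map in the algebra element. -/
def lieAt (F : Type*) [Field F] {𝔲 : Type*} [LieRing 𝔲] [LieAlgebra F 𝔲]
    {V : Type*} [AddCommGroup V] [Module F V] [LieRingModule 𝔲 V] [LieModule F 𝔲 V]
    (v : V) : 𝔲 →ₗ[F] V where
  toFun x := ⁅x, v⁆
  map_add' x y := add_lie x y v
  map_smul' r x := smul_lie r x v

end LieModuleV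

end PDaux

theorem lie_algebra_top_cohomology_coinvariants
    (F : Type*) [Field F] [CharZero F]
    (𝔲 : Type*) [LieRing 𝔲] [LieAlgebra F 𝔲] [Module.Finite F 𝔲]
    [LieRing.IsNilpotent 𝔲]
    (c : ℕ) (hdim : Module.finrank F 𝔲 = c)
    (V : Type*) [AddCommGroup V] [Module F V] [Module.Finite F V]
    [LieRingModule 𝔲 V] [LieModule F 𝔲 V]
    (d : ∀ q : ℕ, AlternatingMap F 𝔲 V (Fin q) →ₗ[F] AlternatingMap F 𝔲 V (Fin (q + 1)))
    (hd : ∀ (q : ℕ) (ω : AlternatingMap F 𝔲 V (Fin q)) (x : Fin (q + 1) → 𝔲),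
      d q ω x =
        (∑ i : Fin (q + 1), ((-1 : F) ^ (i : ℕ)) • ⁅x i, ω (x ∘ i.succAbove)⁆) +
        ∑ j : Fin (q + 1), ∑ i : Fin (q + 1),
          if hij : (i : ℕ) < (j : ℕ) then
            ((-1 : F) ^ (j : ℕ)) •
              ω (Function.update (x ∘ j.succAbove)
                  (⟨(i : ℕ), lt_of_lt_of_le hij (Nat.lt_succ_iff.mp j.isLt)⟩ : Fin q)
                  ⁅x i, x j⁆)
          else 0) :
    ∀ q : ℕ, q + 1 = c →
      Nonempty ((V ⧸ Submodule.span F {w : V | ∃ (x : 𝔲) (v : V), ⁅x, v⁆ = w}) ≃ₗ[F]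
        (TensorProduct F
          ((AlternatingMap F 𝔲 V (Fin (q + 1))) ⧸ LinearMap.range (d q))
          (AlternatingMap F 𝔲 F (Fin (q + 1))))) := by
  intro q hq
  classical
  have hfr : Module.finrank F 𝔲 = q + 1 := by rw [hdim, ← hq]
  let b : Module.Basis (Fin (q + 1)) F 𝔲 := (Module.finBasis F 𝔲).reindex (finCongr hfr)
  -- unimodularity from nilpotency
  have htr : ∀ x : 𝔲, LinearMap.trace F 𝔲 ((LieAlgebra.ad F 𝔲) x) = 0 := by
    intro x
    have h1 : IsNilpotent ((LieAlgebra.ad F 𝔲) x) :=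
      LieModule.isNilpotent_toEnd_of_isNilpotent (R := F) (L := 𝔲) (M := 𝔲) x
    exact (LinearMap.isNilpotent_trace_of_isNilpotent h1).eq_zero
  have hmaster : ∀ (k : Fin (q + 1)) (v : V),
      PDaux.evalTop b (d q (PDaux.ωlow b k v)) = ⁅b k, v⁆ := by
    intro k v
    have h0 : PDaux.evalTop b (d q (PDaux.ωlow b k v)) = (d q (PDaux.ωlow b k v)) ⇑b := rfl
    rw [h0, hd q (PDaux.ωlow b k v) ⇑b]
    exact PDaux.master b htr k v
  set S : Set (AlternatingMap F 𝔲 V (Fin q)) :=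
    Set.range (fun p : Fin (q + 1) × V => PDaux.ωlow b p.1 p.2) with hS
  have hspan : Submodule.span F S = ⊤ := by
    rw [Submodule.eq_top_iff']
    intro ω
    rw [PDaux.ωlow_spans b ω]
    exact Submodule.sum_mem _ fun k _ => Submodule.subset_span ⟨(k, _), rfl⟩
  have hmap : Submodule.map (PDaux.evalTop b) (LinearMap.range (d q))
      = Submodule.span F {w : V | ∃ (x : 𝔲) (v : V), ⁅x, v⁆ = w} := by
    rw [LinearMap.range_eq_map, ← hspan, Submodule.map_span, Submodule.map_span]
    apply le_antisymm
    · rw [Submodule.span_le]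
      rintro w ⟨ω', ⟨ω'', ⟨⟨k, v⟩, rfl⟩, rfl⟩, rfl⟩
      exact Submodule.subset_span ⟨b k, v, (hmaster k v).symm⟩
    · rw [Submodule.span_le]
      rintro w ⟨x, v, rfl⟩
      have hx : ⁅x, v⁆ = PDaux.lieAt F v x := rfl
      rw [hx, ← b.sum_repr x, map_sum]
      refine Submodule.sum_mem _ fun k _ => ?_
      rw [map_smul]
      refine Submodule.smul_mem _ _ (Submodule.subset_span ?_)
      exact ⟨d q (PDaux.ωlow b k v), ⟨PDaux.ωlow b k v, ⟨(k, v), rfl⟩, rfl⟩, hmaster k v⟩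
  let eV := PDaux.evalTopEquiv (W := V) b
  have hcoe : (eV : AlternatingMap F 𝔲 V (Fin (q + 1)) →ₗ[F] V) = PDaux.evalTop b := rfl
  have hmap' : (LinearMap.range (d q)).map
      (eV : AlternatingMap F 𝔲 V (Fin (q + 1)) →ₗ[F] V)
      = Submodule.span F {w : V | ∃ (x : 𝔲) (v : V), ⁅x, v⁆ = w} := by
    rw [hcoe]; exact hmap
  let e1 := Submodule.Quotient.equiv (LinearMap.range (d q))
    (Submodule.span F {w : V | ∃ (x : 𝔲) (v : V), ⁅x, v⁆ = w}) eV hmap'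
  let e2 := PDaux.evalTopEquiv (W := F) b
  exact ⟨e1.symm.trans ((TensorProduct.rid F _).symm.trans
    (TensorProduct.congr (LinearEquiv.refl F _) e2.symm))⟩
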